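/- arXiv:0806.2669 — 6 statements merged into one kernel-verified Lean document; each statement's English description precedes it below -/
import Mathlib

section
/- The orthogonal Procrustes rotation is given by the SVD: if Z = X'HY has singular value decomposition Z = ULV' with U a q×d column-orthogonal matrix, L diagonal nonnegative, V a d×d orthogonal matrix, then A = UV' maximizes tr(A'Z) over all q×d matrices A with A'A = I, and hence minimizes ‖H(X - YA')‖_F² over such A. -/
open Matrix

/-- If `Z = X'HY = ULV'` (SVD), then `A = UV'` maximizes `tr(A'Z)`
over column-orthogonal `A` and hence minimizes `‖H(X - YA')‖_F²`. -/
theorem procrustes_rotation_svd {k q d : ℕ} (hk : 0 < k) (hdq : d ≤ q)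
    (X : Matrix (Fin k) (Fin q) ℝ) (Y : Matrix (Fin k) (Fin d) ℝ)
    (H : Matrix (Fin k) (Fin k) ℝ)
    (hH : H = 1 - (k : ℝ)⁻¹ • Matrix.of (fun _ _ : Fin k => (1 : ℝ)))
    (Z : Matrix (Fin q) (Fin d) ℝ) (hZ : Z = Xᵀ * H * Y)
    (U : Matrix (Fin q) (Fin d) ℝ) (L V : Matrix (Fin d) (Fin d) ℝ)
    (hU : Uᵀ * U = 1) (hV : Vᵀ * V = 1) (hV' : V * Vᵀ = 1)
    (hLdiag : ∀ p r : Fin d, p ≠ r → L p r = 0) (hLpos : ∀ p, 0 ≤ L p p)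
    (hSVD : Z = U * L * Vᵀ) :
    ∀ A : Matrix (Fin q) (Fin d) ℝ, Aᵀ * A = 1 →
      (Aᵀ * Z).trace ≤ ((U * Vᵀ)ᵀ * Z).trace ∧
      ((H * (X - Y * (U * Vᵀ)ᵀ))ᵀ * (H * (X - Y * (U * Vᵀ)ᵀ))).trace ≤
        ((H * (X - Y * Aᵀ))ᵀ * (H * (X - Y * Aᵀ))).trace := by
  have hk' : (k : ℝ) ≠ 0 := Nat.cast_ne_zero.2 hk.ne'
  set J : Matrix (Fin k) (Fin k) ℝ := Matrix.of (fun _ _ : Fin k => (1 : ℝ)) with hJ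
  have hHsym : Hᵀ = H := by
    rw [hH]; ext i j
    simp [hJ, Matrix.one_apply, eq_comm]
  have hJJ : J * J = (k : ℝ) • J := by
    ext i j
    simp [hJ, Matrix.mul_apply]
  have hHH : H * H = H := by
    have hcc : ((k:ℝ)⁻¹ • J) * ((k:ℝ)⁻¹ • J) = (k:ℝ)⁻¹ • J := by
      rw [Matrix.smul_mul, Matrix.mul_smul, hJJ, smul_smul, smul_smul]
      congr 1
      field_simp
    rw [hH, sub_mul, mul_sub, mul_sub, hcc]
    simp only [one_mul, mul_one]
    abel
  -- objective value for column-orthogonal B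
  have obj : ∀ B : Matrix (Fin q) (Fin d) ℝ, Bᵀ * B = 1 →
      ((H * (X - Y * Bᵀ))ᵀ * (H * (X - Y * Bᵀ))).trace =
        (Xᵀ * H * X).trace + (Yᵀ * H * Y).trace - 2 * (Bᵀ * Z).trace := by
    intro B hB
    have e1 : (H * (X - Y * Bᵀ))ᵀ * (H * (X - Y * Bᵀ))
        = (X - Y * Bᵀ)ᵀ * H * (X - Y * Bᵀ) := by
      rw [Matrix.transpose_mul, hHsym]
      rw [Matrix.mul_assoc, ← Matrix.mul_assoc H H, hHH, ← Matrix.mul_assoc]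
    rw [e1, Matrix.transpose_sub, Matrix.transpose_mul, Matrix.transpose_transpose]
    rw [Matrix.sub_mul, Matrix.sub_mul, Matrix.mul_sub, Matrix.mul_sub]
    rw [Matrix.trace_sub, Matrix.trace_sub, Matrix.trace_sub]
    have t1 : (Xᵀ * H * (Y * Bᵀ)).trace = (Bᵀ * Z).trace := by
      rw [hZ, ← Matrix.mul_assoc, Matrix.trace_mul_comm, ← Matrix.mul_assoc]
    have t2 : (B * Yᵀ * H * X).trace = (Bᵀ * Z).trace := by
      have : (B * Yᵀ * H * X) = B * (Yᵀ * H * X) := by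
        rw [Matrix.mul_assoc, Matrix.mul_assoc, Matrix.mul_assoc]
      rw [this, Matrix.trace_mul_comm, ← Matrix.trace_transpose, Matrix.transpose_mul, hZ]
      congr 2
      rw [Matrix.transpose_mul, Matrix.transpose_mul, hHsym, Matrix.transpose_transpose,
        Matrix.mul_assoc]
    have t3 : (B * Yᵀ * H * (Y * Bᵀ)).trace = (Yᵀ * H * Y).trace := by
      have : (B * Yᵀ * H * (Y * Bᵀ)) = B * (Yᵀ * H * Y) * Bᵀ := by
        simp [Matrix.mul_assoc]
      rw [this, Matrix.trace_mul_comm, ← Matrix.mul_assoc, hB, one_mul]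
    rw [t1, t2, t3]
    ring
  -- trace of A₀ᵀ Z equals trace L
  have hA0 : ((U * Vᵀ)ᵀ * Z).trace = L.trace := by
    rw [hSVD, Matrix.transpose_mul, Matrix.transpose_transpose]
    have : V * Uᵀ * (U * L * Vᵀ) = V * L * Vᵀ := by
      rw [Matrix.mul_assoc V Uᵀ, Matrix.mul_assoc U L, ← Matrix.mul_assoc Uᵀ U, hU, one_mul,
        ← Matrix.mul_assoc]
    rw [this, Matrix.trace_mul_comm, ← Matrix.mul_assoc, hV, one_mul]
  intro A hA
  -- key inequality: tr(AᵀZ) ≤ tr L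
  have key : (Aᵀ * Z).trace ≤ L.trace := by
    have htr : (Aᵀ * Z).trace = ((Vᵀ * (Aᵀ * U)) * L).trace := by
      rw [hSVD, ← Matrix.mul_assoc, Matrix.trace_mul_comm]
      congr 1
      rw [Matrix.mul_assoc, Matrix.mul_assoc]
    set M : Matrix (Fin d) (Fin d) ℝ := Vᵀ * (Aᵀ * U) with hM
    have hMpp : ∀ p : Fin d, M p p ≤ 1 := by
      intro p
      have hf : ∑ j : Fin q, ((A * V) j p) ^ 2 = 1 := by
        have : ((A * V)ᵀ * (A * V)) p p = (1 : Matrix (Fin d) (Fin d) ℝ) p p := by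
          rw [Matrix.transpose_mul, Matrix.mul_assoc, ← Matrix.mul_assoc Aᵀ A, hA, one_mul, hV]
        simpa [Matrix.mul_apply, sq, mul_comm] using this
      have hg : ∑ j : Fin q, (U j p) ^ 2 = 1 := by
        have : (Uᵀ * U) p p = (1 : Matrix (Fin d) (Fin d) ℝ) p p := by rw [hU]
        simpa [Matrix.mul_apply, sq] using this
      have hMval : M p p = ∑ j : Fin q, (A * V) j p * U j p := by
        have : M = (A * V)ᵀ * U := by rw [hM, Matrix.transpose_mul, Matrix.mul_assoc]
        rw [this]
        simp [Matrix.mul_apply, mul_comm]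
      have hcs := Finset.sum_mul_sq_le_sq_mul_sq Finset.univ
        (fun j : Fin q => (A * V) j p) (fun j : Fin q => U j p)
      rw [hf, hg, mul_one] at hcs
      rw [hMval]
      nlinarith [hcs]
    rw [htr]
    have hdiag : (M * L).trace = ∑ p : Fin d, M p p * L p p := by
      rw [Matrix.trace]
      apply Finset.sum_congr rfl
      intro p _
      rw [Matrix.diag, Matrix.mul_apply]
      rw [Finset.sum_eq_single p]
      · intro r _ hr; rw [hLdiag r p (by exact hr), mul_zero]
      · intro h; exact absurd (Finset.mem_univ p) h
    rw [hdiag, Matrix.trace]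
    apply Finset.sum_le_sum
    intro p _
    calc M p p * L p p ≤ 1 * L p p := mul_le_mul_of_nonneg_right (hMpp p) (hLpos p)
    _ = L p p := one_mul _
  refine ⟨by rw [hA0]; exact key, ?_⟩
  have hA0orth : (U * Vᵀ)ᵀ * (U * Vᵀ) = 1 := by
    rw [Matrix.transpose_mul, Matrix.transpose_transpose, Matrix.mul_assoc V Uᵀ,
      ← Matrix.mul_assoc Uᵀ U, hU, one_mul, hV']
  rw [obj A hA, obj (U * Vᵀ) hA0orth, hA0]
  linarith
end

section
/- The best rank-d approximation in Frobenius norm to a centered matrix is its projection onto the top d principal components: if X is a k×q centered matrix of rank q and d ≤ q, then inf over rank-d matrices X̃ of ‖X - X̃‖_F² is attained when X̃ is the projection of X on the subspace spanned by the first d principal components of X (eigenvectors of X'X corresponding to its d largest eigenvalues). -/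
open Matrix Module

set_option maxHeartbeats 1000000

lemma exists_proj_matrix {k q : ℕ} (B : Matrix (Fin k) (Fin q) ℝ) :
    ∃ π : Matrix (Fin q) (Fin q) ℝ,
      πᵀ = π ∧ π * π = π ∧ B * π = B ∧ π.trace = (B.rank : ℝ) := by
  classical
  set E := EuclideanSpace ℝ (Fin q) with hE
  set W : Submodule ℝ E := LinearMap.range (Matrix.toEuclideanLin Bᵀ) with hW
  set pr : E →L[ℝ] E := W.subtypeL ∘L W.orthogonalProjectionOnto with hpr
  set π : Matrix (Fin q) (Fin q) ℝ := Matrix.toEuclideanLin.symm (pr : E →ₗ[ℝ] E) with hπdef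
  have hπ : Matrix.toEuclideanLin π = (pr : E →ₗ[ℝ] E) :=
    Matrix.toEuclideanLin.apply_symm_apply _
  have hfix : ∀ x : E, x ∈ W → pr x = x := by
    intro x hx
    exact Submodule.starProjection_eq_self_iff.mpr hx
  have hprmem : ∀ x : E, pr x ∈ W := by
    intro x
    simp [hpr]
  have hidem : π * π = π := by
    apply Matrix.toEuclideanLin.injective
    have h : Matrix.toEuclideanLin (π * π)
        = (Matrix.toEuclideanLin π) ∘ₗ (Matrix.toEuclideanLin π) := by
      rw [Matrix.toEuclideanLin_eq_toLin]
      exact Matrix.toLin_mul _ _ _ π π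
    rw [h, hπ]
    exact LinearMap.ext fun x => hfix (pr x) (hprmem x)
  have hsym : πᵀ = π := by
    have h1 : πᴴ = π := by
      apply Matrix.toEuclideanLin.injective
      rw [Matrix.toEuclideanLin_conjTranspose_eq_adjoint, hπ]
      exact ((LinearMap.isSymmetric_iff_isSelfAdjoint _).mp
        (Submodule.starProjection_isSymmetric W))
    rwa [Matrix.conjTranspose_eq_transpose_of_trivial] at h1
  have hBπ : B * π = B := by
    have h1 : π * Bᵀ = Bᵀ := by
      apply Matrix.toEuclideanLin.injective
      have h : Matrix.toEuclideanLin (π * Bᵀ)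
          = (Matrix.toEuclideanLin π) ∘ₗ (Matrix.toEuclideanLin Bᵀ) := by
        rw [Matrix.toEuclideanLin_eq_toLin]
        exact Matrix.toLin_mul (PiLp.basisFun 2 ℝ (Fin k)) (PiLp.basisFun 2 ℝ (Fin q))
          (PiLp.basisFun 2 ℝ (Fin q)) π Bᵀ
      rw [h, hπ]
      exact LinearMap.ext fun x => hfix _ ⟨x, rfl⟩
    have h2 := congrArg Matrix.transpose h1
    rwa [Matrix.transpose_mul, Matrix.transpose_transpose, hsym] at h2
  have htr : π.trace = (B.rank : ℝ) := by
    have h1 : π.trace = LinearMap.trace ℝ E (pr : E →ₗ[ℝ] E) := by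
      rw [LinearMap.trace_eq_matrix_trace ℝ (PiLp.basisFun 2 ℝ (Fin q))]
      have : LinearMap.toMatrix (PiLp.basisFun 2 ℝ (Fin q)) (PiLp.basisFun 2 ℝ (Fin q))
          (pr : E →ₗ[ℝ] E) = π := by
        rw [← hπ, Matrix.toEuclideanLin_eq_toLin, LinearMap.toMatrix_toLin]
      rw [this]
    have h2 : LinearMap.trace ℝ E (pr : E →ₗ[ℝ] E) = (finrank ℝ W : ℝ) := by
      have hco : (pr : E →ₗ[ℝ] E)
          = W.subtype ∘ₗ ((W.orthogonalProjectionOnto : E →L[ℝ] W) : E →ₗ[ℝ] W) := rfl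
      rw [hco, LinearMap.trace_comp_comm']
      have hid : (((W.orthogonalProjectionOnto : E →L[ℝ] W) : E →ₗ[ℝ] W) ∘ₗ W.subtype)
          = LinearMap.id := by
        exact LinearMap.ext fun w => Submodule.orthogonalProjectionOnto_mem_subspace_eq_self w
      rw [hid, LinearMap.trace_id]
    have h3 : finrank ℝ W = B.rank := by
      rw [← Matrix.rank_transpose B,
        Matrix.rank_eq_finrank_range_toLin Bᵀ (PiLp.basisFun 2 ℝ (Fin q))
          (PiLp.basisFun 2 ℝ (Fin k))]
      rw [hW, Matrix.toEuclideanLin_eq_toLin]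
    rw [h1, h2, h3]
  exact ⟨π, hsym, hidem, hBπ, htr⟩

lemma sum_ind {q d : ℕ} (hd : d ≤ q) (f : Fin q → ℝ) :
    (∑ j : Fin q, if (j : ℕ) < d then f j else 0) = ∑ j : Fin d, f (Fin.castLE hd j) := by
  classical
  set F : ℕ → ℝ := fun i => if h : i < q then (if i < d then f ⟨i, h⟩ else 0) else 0 with hF
  have h1 : (∑ j : Fin q, if (j : ℕ) < d then f j else 0) = ∑ j : Fin q, F (j : ℕ) := by
    apply Finset.sum_congr rfl
    intro j _
    simp [hF, j.isLt]
  have h2 : (∑ j : Fin d, f (Fin.castLE hd j)) = ∑ j : Fin d, F (j : ℕ) := by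
    apply Finset.sum_congr rfl
    intro j _
    have hjq : (j : ℕ) < q := lt_of_lt_of_le j.isLt hd
    simp [hF, hjq, j.isLt]
    rfl
  rw [h1, h2, Fin.sum_univ_eq_sum_range F q, Fin.sum_univ_eq_sum_range F d]
  refine (Finset.sum_subset (Finset.range_subset_range.mpr hd) ?_).symm
  intro i _ hi
  simp only [Finset.mem_range, not_lt] at hi
  simp [hF, Nat.not_lt.mpr hi]

lemma key_bound {q d : ℕ} (hd : d ≤ q) (μ t : Fin q → ℝ)
    (hmono : ∀ i j : Fin q, i ≤ j → μ j ≤ μ i) (hμ : ∀ j, 0 ≤ μ j)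
    (ht0 : ∀ j, 0 ≤ t j) (ht1 : ∀ j, t j ≤ 1) (hsum : ∑ j, t j ≤ (d : ℝ)) :
    ∑ j, μ j * t j ≤ ∑ j : Fin d, μ (Fin.castLE hd j) := by
  classical
  set c : ℝ := if h : d < q then μ ⟨d, h⟩ else 0 with hc
  have hc0 : 0 ≤ c := by
    rw [hc]; split
    · exact hμ _
    · exact le_refl 0
  set s : Fin q → ℝ := fun j => if (j : ℕ) < d then 1 else 0 with hs
  have key : ∀ j : Fin q, μ j * t j ≤ μ j * s j + c * (t j - s j) := by
    intro j
    by_cases hj : (j : ℕ) < d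
    · have hs1 : s j = 1 := by simp [hs, hj]
      rw [hs1]
      have hcm : c ≤ μ j := by
        rw [hc]; split
        · exact hmono j _ (by simpa [Fin.le_def] using Nat.le_of_lt_succ (Nat.lt_succ_of_lt hj))
        · exact hμ j
      nlinarith [ht1 j]
    · have hs0 : s j = 0 := by simp [hs, hj]
      rw [hs0]
      have hdq : d < q := lt_of_le_of_lt (Nat.not_lt.mp hj) j.isLt
      have hcm : μ j ≤ c := by
        rw [hc, dif_pos hdq]
        exact hmono ⟨d, hdq⟩ j (by simpa [Fin.le_def] using Nat.not_lt.mp hj)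
      nlinarith [ht0 j]
  have hssum : ∑ j, s j = (d : ℝ) := by
    rw [hs]
    rw [sum_ind hd (fun _ => (1 : ℝ))]
    simp
  have hμs : ∑ j, μ j * s j = ∑ j : Fin d, μ (Fin.castLE hd j) := by
    have : ∀ j : Fin q, μ j * s j = if (j : ℕ) < d then μ j else 0 := by
      intro j; rw [hs]; by_cases hj : (j : ℕ) < d <;> simp [hj]
    simp_rw [this]
    exact sum_ind hd μ
  calc ∑ j, μ j * t j ≤ ∑ j, (μ j * s j + c * (t j - s j)) := Finset.sum_le_sum fun j _ => key j
    _ = ∑ j, μ j * s j + c * (∑ j, t j - ∑ j, s j) := by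
        rw [Finset.sum_add_distrib]
        congr 1
        rw [← Finset.sum_sub_distrib, Finset.mul_sum]
    _ ≤ ∑ j, μ j * s j + 0 := by
        have : ∑ j, t j - ∑ j, s j ≤ 0 := by rw [hssum]; linarith
        nlinarith
    _ = ∑ j : Fin d, μ (Fin.castLE hd j) := by rw [add_zero, hμs]

lemma trace_mul_self_nonneg {k q : ℕ} (M : Matrix (Fin k) (Fin q) ℝ) :
    0 ≤ (Mᵀ * M).trace := by
  rw [Matrix.trace]
  apply Finset.sum_nonneg
  intro j _
  rw [Matrix.diag_apply, Matrix.mul_apply]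
  apply Finset.sum_nonneg
  intro i _
  simp only [Matrix.transpose_apply]
  exact mul_self_nonneg _

lemma trace_residual {k q : ℕ} (X : Matrix (Fin k) (Fin q) ℝ) (π : Matrix (Fin q) (Fin q) ℝ)
    (hs : πᵀ = π) (hi : π * π = π) :
    ((X - X * π)ᵀ * (X - X * π)).trace = (Xᵀ * X).trace - (Xᵀ * X * π).trace := by
  have hexp : (X - X * π)ᵀ * (X - X * π)
      = Xᵀ * X - Xᵀ * X * π - π * (Xᵀ * X) + π * (Xᵀ * X) * π := by
    rw [Matrix.transpose_sub, Matrix.transpose_mul, hs]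
    rw [Matrix.sub_mul, Matrix.mul_sub, Matrix.mul_sub]
    simp only [Matrix.mul_assoc]
    abel
  rw [hexp, Matrix.trace_add, Matrix.trace_sub, Matrix.trace_sub]
  have h1 : (π * (Xᵀ * X)).trace = (Xᵀ * X * π).trace := Matrix.trace_mul_comm _ _
  have h2 : (π * (Xᵀ * X) * π).trace = (Xᵀ * X * π).trace := by
    rw [Matrix.trace_mul_comm, ← Matrix.mul_assoc, hi]
    exact Matrix.trace_mul_comm _ _
  rw [h1, h2]
  ring

/-- The best rank-`d` approximation in Frobenius norm to a centered
matrix `X` of rank `q` is its projection `XPP'` onto the span of the first `d`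
principal components (top-`d` eigenvectors of `X'X`). -/
theorem pca_best_rank_d {k q d : ℕ} (hd : d ≤ q)
    (X : Matrix (Fin k) (Fin q) ℝ)
    (hcent : ∀ j, ∑ i, X i j = 0) (hrank : X.rank = q)
    (Q : Matrix (Fin q) (Fin q) ℝ) (μ : Fin q → ℝ)
    (hQ : Qᵀ * Q = 1) (hQ' : Q * Qᵀ = 1)
    (hdiag : Xᵀ * X = Q * Matrix.diagonal μ * Qᵀ)
    (hmono : ∀ i j : Fin q, i ≤ j → μ j ≤ μ i)
    (P : Matrix (Fin q) (Fin d) ℝ)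
    (hP : P = Q.submatrix id (Fin.castLE hd)) :
    ∀ Xt : Matrix (Fin k) (Fin q) ℝ, Xt.rank ≤ d →
      ((X - X * P * Pᵀ)ᵀ * (X - X * P * Pᵀ)).trace ≤
        ((X - Xt)ᵀ * (X - Xt)).trace := by
  classical
  intro Xt hrXt
  set f : Fin d → Fin q := Fin.castLE hd with hf
  -- basic facts about P
  have hPP : Pᵀ * P = (1 : Matrix (Fin d) (Fin d) ℝ) := by
    ext i j
    have h := congrFun (congrFun hQ (f i)) (f j)
    simp only [Matrix.mul_apply, Matrix.transpose_apply] at h ⊢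
    rw [hP]
    simp only [Matrix.submatrix_apply, id_eq]
    rw [h]
    simp [Matrix.one_apply, hf, Fin.castLE_inj]
  have hPs : (P * Pᵀ)ᵀ = P * Pᵀ := by
    rw [Matrix.transpose_mul, Matrix.transpose_transpose]
  have hPi : (P * Pᵀ) * (P * Pᵀ) = P * Pᵀ := by
    rw [Matrix.mul_assoc, ← Matrix.mul_assoc Pᵀ P Pᵀ, hPP, Matrix.one_mul]
  have hQP : Qᵀ * P = (1 : Matrix (Fin q) (Fin q) ℝ).submatrix id f := by
    ext a j
    have h := congrFun (congrFun hQ a) (f j)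
    simp only [Matrix.mul_apply, Matrix.transpose_apply] at h ⊢
    rw [hP]
    simp only [Matrix.submatrix_apply, id_eq]
    rw [h]
    rfl
  have hPQ : Pᵀ * Q = ((1 : Matrix (Fin q) (Fin q) ℝ).submatrix id f)ᵀ := by
    have h := congrArg Matrix.transpose hQP
    rwa [Matrix.transpose_mul, Matrix.transpose_transpose] at h
  -- trace of projected part
  have htrP : (Xᵀ * X * (P * Pᵀ)).trace = ∑ j : Fin d, μ (f j) := by
    have h1 : (Xᵀ * X * (P * Pᵀ)).trace = (Pᵀ * (Xᵀ * X) * P).trace := by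
      rw [← Matrix.mul_assoc, Matrix.trace_mul_comm, ← Matrix.mul_assoc]
    have h2 : Pᵀ * (Xᵀ * X) * P = Matrix.diagonal (fun j => μ (f j)) := by
      rw [hdiag]
      have hgr : Pᵀ * (Q * Matrix.diagonal μ * Qᵀ) * P
          = (Pᵀ * Q) * (Matrix.diagonal μ * (Qᵀ * P)) := by
        simp only [Matrix.mul_assoc]
      rw [hgr, hPQ, hQP]
      have hinj : Function.Injective f := by
        rw [hf]; exact fun a b hab => Fin.castLE_inj.mp hab
      ext i j
      simp only [Matrix.mul_apply, Matrix.transpose_apply, Matrix.submatrix_apply, id_eq,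
        Matrix.diagonal_apply, Matrix.one_apply]
      simp only [ite_mul, mul_ite, one_mul, mul_one, zero_mul, mul_zero]
      simp only [Finset.sum_ite_eq', Finset.mem_univ, if_true]
      rcases eq_or_ne i j with rfl | hij
      · simp
      · rw [if_neg (fun h => hij (hinj h)), if_neg hij]
    rw [h1, h2, Matrix.trace_diagonal]
  -- nonnegativity of eigenvalues
  have hDD : Matrix.diagonal μ = (X * Q)ᵀ * (X * Q) := by
    have h1 : Qᵀ * (Xᵀ * X) * Q = Matrix.diagonal μ := by
      rw [hdiag]
      calc Qᵀ * (Q * Matrix.diagonal μ * Qᵀ) * Q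
          = (Qᵀ * Q) * Matrix.diagonal μ * (Qᵀ * Q) := by simp only [Matrix.mul_assoc]
        _ = Matrix.diagonal μ := by rw [hQ, Matrix.one_mul, Matrix.mul_one]
    rw [← h1, Matrix.transpose_mul]
    simp only [Matrix.mul_assoc]
  have hμ0 : ∀ j, 0 ≤ μ j := by
    intro j
    have h := congrFun (congrFun hDD j) j
    rw [Matrix.diagonal_apply_eq, Matrix.mul_apply] at h
    rw [h]
    apply Finset.sum_nonneg
    intro i _
    simp only [Matrix.transpose_apply]
    exact mul_self_nonneg _
  -- the projection onto the row space of Xt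
  obtain ⟨π, hπs, hπi, hπB, hπtr⟩ := exists_proj_matrix Xt
  -- Pythagoras
  set C : Matrix (Fin k) (Fin q) ℝ := X - X * π with hC
  set Dm : Matrix (Fin k) (Fin q) ℝ := X * π - Xt with hDm
  have hA : X - Xt = C + Dm := by rw [hC, hDm]; abel
  have hDmπ : Dm * π = Dm := by
    rw [hDm, Matrix.sub_mul, Matrix.mul_assoc, hπi, hπB]
  have hCπ : C * π = 0 := by
    rw [hC, Matrix.sub_mul, Matrix.mul_assoc, hπi, sub_self]
  have hπC : π * Cᵀ = 0 := by
    rw [← hπs, ← Matrix.transpose_mul, hCπ, Matrix.transpose_zero]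
  have hcross : (Cᵀ * Dm).trace = 0 := by
    conv_lhs => rw [← hDmπ, ← Matrix.mul_assoc]
    rw [Matrix.trace_mul_comm, ← Matrix.mul_assoc, hπC, Matrix.zero_mul, Matrix.trace_zero]
  have hcross2 : (Dmᵀ * C).trace = 0 := by
    have h1 : Dmᵀ * C = (Cᵀ * Dm)ᵀ := by
      rw [Matrix.transpose_mul, Matrix.transpose_transpose]
    rw [h1, Matrix.trace_transpose, hcross]
  have hexp : ((X - Xt)ᵀ * (X - Xt)).trace
      = (Cᵀ * C).trace + (Dmᵀ * Dm).trace := by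
    rw [hA, Matrix.transpose_add, Matrix.add_mul, Matrix.mul_add, Matrix.mul_add,
      Matrix.trace_add, Matrix.trace_add, Matrix.trace_add, hcross, hcross2]
    ring
  have hCtr : (Cᵀ * C).trace = (Xᵀ * X).trace - (Xᵀ * X * π).trace :=
    trace_residual X π hπs hπi
  -- the Ky Fan bound
  have hkey : (Xᵀ * X * π).trace ≤ ∑ j : Fin d, μ (f j) := by
    set M : Matrix (Fin q) (Fin q) ℝ := Qᵀ * π * Q with hM
    have hMs : Mᵀ = M := by
      rw [hM, Matrix.transpose_mul, Matrix.transpose_mul, Matrix.transpose_transpose, hπs,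
        Matrix.mul_assoc]
    have hMi : M * M = M := by
      rw [hM]
      calc (Qᵀ * π * Q) * (Qᵀ * π * Q) = Qᵀ * π * (Q * Qᵀ) * (π * Q) := by
            simp only [Matrix.mul_assoc]
        _ = Qᵀ * π * Q := by
            rw [hQ', Matrix.mul_one, Matrix.mul_assoc, ← Matrix.mul_assoc π π Q, hπi,
              ← Matrix.mul_assoc]
    have hMtr : M.trace = π.trace := by
      rw [hM, Matrix.trace_mul_comm, ← Matrix.mul_assoc, hQ', Matrix.one_mul]
    have htrm : (Xᵀ * X * π).trace = ∑ j, μ j * M j j := by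
      rw [hdiag]
      have h1 : Q * Matrix.diagonal μ * Qᵀ * π = Q * (Matrix.diagonal μ * (Qᵀ * π)) := by
        simp only [Matrix.mul_assoc]
      rw [h1, Matrix.trace_mul_comm, Matrix.mul_assoc, ← hM]
      rw [Matrix.trace]
      apply Finset.sum_congr rfl
      intro j _
      rw [Matrix.diag_apply, Matrix.diagonal_mul]
    have hdiagM : ∀ j, M j j = ∑ a, (M j a) ^ 2 := by
      intro j
      have h := congrFun (congrFun hMi j) j
      rw [Matrix.mul_apply] at h
      rw [← h]
      apply Finset.sum_congr rfl
      intro a _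
      have hsym := congrFun (congrFun hMs j) a
      rw [Matrix.transpose_apply] at hsym
      rw [← hsym]; ring
    have ht0 : ∀ j, 0 ≤ M j j := by
      intro j; rw [hdiagM j]
      exact Finset.sum_nonneg fun a _ => sq_nonneg _
    have ht1 : ∀ j, M j j ≤ 1 := by
      intro j
      have hsq : (M j j) ^ 2 ≤ M j j := by
        conv_rhs => rw [hdiagM j]
        exact Finset.single_le_sum (fun a _ => sq_nonneg (M j a)) (Finset.mem_univ j)
      nlinarith [ht0 j]
    have hsum : ∑ j, M j j ≤ (d : ℝ) := by
      have : ∑ j, M j j = M.trace := rfl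
      rw [this, hMtr, hπtr]
      exact_mod_cast hrXt
    rw [htrm]
    exact key_bound hd μ (fun j => M j j) hmono hμ0 ht0 ht1 hsum
  -- assemble
  have hLHS : ((X - X * P * Pᵀ)ᵀ * (X - X * P * Pᵀ)).trace
      = (Xᵀ * X).trace - (Xᵀ * X * (P * Pᵀ)).trace := by
    rw [Matrix.mul_assoc]
    exact trace_residual X (P * Pᵀ) hPs hPi
  have hDD2 := trace_mul_self_nonneg Dm
  rw [hLHS, htrP, hexp, hCtr]
  linarith
end

section
/- Second-order convergence of the local Procrustes error under an isometric C² embedding: if φ is a C² map with J = Dφ(z₀) satisfying J'J = I, then for points z₀, z₁, …, z_k in a ball of radius r around z₀ and x_j = φ(z_j), the quantity inf over column-orthogonal A and b of ∑_j ‖x_j - A z_j - b‖² is O(r⁴) as r → 0; specifically it is bounded by C·k·r⁴ where C depends only on the bound of the second derivative of φ. -/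
open Matrix
open scoped RealInnerProductSpace

/-- Second-order convergence of the local Procrustes error under an
isometric C² embedding: there is a constant `C` depending only on the bound `M`
of the second derivative such that the local Procrustes infimum is at most
`C·k·r⁴`. -/
theorem local_procrustes_isometric (M : ℝ) (hM : 0 ≤ M) :
    ∃ C : ℝ, ∀ (d q : ℕ), d ≤ q → ∀ (k : ℕ)
      (D : Set (EuclideanSpace ℝ (Fin d))), Convex ℝ D →
      ∀ (φ : EuclideanSpace ℝ (Fin d) → EuclideanSpace ℝ (Fin q)),
      ContDiff ℝ 2 φ →
      (∀ z ∈ D, ‖iteratedFDeriv ℝ 2 φ z‖ ≤ M) →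
      ∀ z₀ : EuclideanSpace ℝ (Fin d), z₀ ∈ D →
      (∀ v, ‖fderiv ℝ φ z₀ v‖ = ‖v‖) →
      ∀ z : Fin k → EuclideanSpace ℝ (Fin d), (∀ j, z j ∈ D) →
      ∀ r : ℝ, 0 ≤ r → (∀ j, ‖z j - z₀‖ ≤ r) →
      sInf {s : ℝ | ∃ (A : Matrix (Fin q) (Fin d) ℝ) (b : Fin q → ℝ),
          Aᵀ * A = 1 ∧
          s = ∑ j, ∑ i, (φ (z j) i - A.mulVec (fun l => z j l) i - b i) ^ 2} ≤
        C * k * r ^ 4 := by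
  refine ⟨M ^ 2, ?_⟩
  intro d q hdq k D hD φ hφ hM2 z₀ hz₀ hiso z hz r hr hzr
  set J := fderiv ℝ φ z₀ with hJ
  -- the isometry preserves inner products
  have hJli : ∀ v w : EuclideanSpace ℝ (Fin d), (inner ℝ (J v) (J w) : ℝ) = (inner ℝ (v) (w) : ℝ) := by
    intro v w
    exact (LinearIsometry.mk (J : EuclideanSpace ℝ (Fin d) →ₗ[ℝ]
      EuclideanSpace ℝ (Fin q)) hiso).inner_map_map v w
  -- the matrix of J
  set A : Matrix (Fin q) (Fin d) ℝ :=
    Matrix.of (fun i l => J (EuclideanSpace.single l 1) i) with hA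
  have hmul : ∀ w : EuclideanSpace ℝ (Fin d), ∀ i,
      A.mulVec (fun l => w l) i = J w i := by
    intro w i
    have hw : w = ∑ l : Fin d, w l • EuclideanSpace.single l (1 : ℝ) := by
      ext m
      rw [WithLp.ofLp_sum, Finset.sum_apply]
      simp [EuclideanSpace.single_apply]
    calc A.mulVec (fun l => w l) i
        = ∑ l : Fin d, w l * J (EuclideanSpace.single l 1) i := by
          simp [Matrix.mulVec, dotProduct, hA, mul_comm]
      _ = J w i := by
          conv_rhs => rw [hw]
          rw [map_sum, WithLp.ofLp_sum, Finset.sum_apply]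
          simp
  have hAO : Aᵀ * A = 1 := by
    ext l m
    have : (inner ℝ (J (EuclideanSpace.single l 1)) (J (EuclideanSpace.single m 1)) : ℝ)
        = (inner ℝ ((EuclideanSpace.single l (1:ℝ))) (EuclideanSpace.single m 1) : ℝ) := hJli _ _
    simp only [EuclideanSpace.inner_single_left, EuclideanSpace.inner_single_right] at this
    simp only [Matrix.mul_apply, Matrix.transpose_apply, Matrix.one_apply, hA, Matrix.of_apply]
    rw [show (∑ i, J (EuclideanSpace.single l 1) i * J (EuclideanSpace.single m 1) i)
        = (inner ℝ (J (EuclideanSpace.single l 1)) (J (EuclideanSpace.single m 1)) : ℝ) by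
          simp [PiLp.inner_apply, RCLike.inner_apply, mul_comm]]
    rw [this]
    simp [EuclideanSpace.single_apply, eq_comm]
  -- Taylor estimate
  have key : ∀ j, ‖φ (z j) - φ z₀ - J (z j - z₀)‖ ≤ M * r * ‖z j - z₀‖ := by
    intro j
    set S : Set (EuclideanSpace ℝ (Fin d)) := D ∩ Metric.closedBall z₀ r with hS
    have hSconv : Convex ℝ S := hD.inter (convex_closedBall _ _)
    have hz₀S : z₀ ∈ S := ⟨hz₀, Metric.mem_closedBall_self hr⟩
    have hzjS : z j ∈ S := ⟨hz j, by simpa [Metric.mem_closedBall, dist_eq_norm] using hzr j⟩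
    have hdiff : Differentiable ℝ φ := hφ.differentiable (by norm_num)
    have hdiff2 : Differentiable ℝ (fderiv ℝ φ) :=
      (hφ.fderiv_right (m := 1) (by norm_num)).differentiable (by norm_num)
    -- fderiv φ is M-Lipschitz on S
    have hlip : ∀ y ∈ S, ‖fderiv ℝ φ y - J‖ ≤ M * r := by
      intro y hy
      have h1 : ‖fderiv ℝ φ y - fderiv ℝ φ z₀‖ ≤ M * ‖y - z₀‖ := by
        apply hD.norm_image_sub_le_of_norm_fderiv_le
          (fun x _ => hdiff2 x) ?_ hz₀ hy.1
        intro x hx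
        have : ‖fderiv ℝ (fderiv ℝ φ) x‖ = ‖iteratedFDeriv ℝ 2 φ x‖ := by
          rw [← norm_iteratedFDeriv_fderiv (n := 1)]
          rw [show (1:ℕ) = 0 + 1 from rfl, ← norm_iteratedFDeriv_fderiv (n := 0),
            norm_iteratedFDeriv_zero]
        rw [this]
        exact hM2 x hx
      have h2 : ‖y - z₀‖ ≤ r := by
        have := hy.2
        rwa [Metric.mem_closedBall, dist_eq_norm] at this
      calc ‖fderiv ℝ φ y - J‖ ≤ M * ‖y - z₀‖ := h1
        _ ≤ M * r := by nlinarith [norm_nonneg (y - z₀)]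
    -- apply mean value to g = φ - J
    have main : ‖(fun y => φ y - J y) (z j) - (fun y => φ y - J y) z₀‖
        ≤ M * r * ‖z j - z₀‖ := by
      refine hSconv.norm_image_sub_le_of_norm_fderiv_le
        (fun x _ => (hdiff x).sub J.differentiableAt) (fun x hx => ?_) hz₀S hzjS
      have : fderiv ℝ (fun y => φ y - J y) x = fderiv ℝ φ x - J := by
        rw [fderiv_fun_sub (hdiff x) J.differentiableAt, J.fderiv]
      rw [show (φ - ⇑J) = (fun y => φ y - J y) from rfl, this]
      exact hlip x hx
    have : φ (z j) - φ z₀ - J (z j - z₀) = (φ (z j) - J (z j)) - (φ z₀ - J z₀) := by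
      rw [map_sub]; abel
    rw [this]
    exact main
  -- pick the candidate
  set b : Fin q → ℝ := fun i => φ z₀ i - A.mulVec (fun l => z₀ l) i with hb
  have hmem : (∑ j, ∑ i, (φ (z j) i - A.mulVec (fun l => z j l) i - b i) ^ 2) ∈
      {s : ℝ | ∃ (A : Matrix (Fin q) (Fin d) ℝ) (b : Fin q → ℝ),
          Aᵀ * A = 1 ∧
          s = ∑ j, ∑ i, (φ (z j) i - A.mulVec (fun l => z j l) i - b i) ^ 2} :=
    ⟨A, b, hAO, rfl⟩
  have hbdd : BddBelow {s : ℝ | ∃ (A : Matrix (Fin q) (Fin d) ℝ) (b : Fin q → ℝ),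
          Aᵀ * A = 1 ∧
          s = ∑ j, ∑ i, (φ (z j) i - A.mulVec (fun l => z j l) i - b i) ^ 2} := by
    refine ⟨0, ?_⟩
    rintro s ⟨A', b', _, rfl⟩
    positivity
  refine le_trans (csInf_le hbdd hmem) ?_
  have hsum : ∀ j, (∑ i, (φ (z j) i - A.mulVec (fun l => z j l) i - b i) ^ 2)
      ≤ M ^ 2 * r ^ 4 := by
    intro j
    have heq : ∀ i, φ (z j) i - A.mulVec (fun l => z j l) i - b i
        = (φ (z j) - φ z₀ - J (z j - z₀)) i := by
      intro i
      have h5 : J (z j - z₀) = J (z j) - J z₀ := map_sub _ _ _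
      simp only [hb, hmul, h5, PiLp.sub_apply]
      ring
    have h1 : (∑ i, (φ (z j) i - A.mulVec (fun l => z j l) i - b i) ^ 2)
        = ‖φ (z j) - φ z₀ - J (z j - z₀)‖ ^ 2 := by
      rw [EuclideanSpace.norm_eq, Real.sq_sqrt (by positivity)]
      exact Finset.sum_congr rfl fun i _ => by
        rw [heq i, Real.norm_eq_abs, sq_abs]
    rw [h1]
    have h2 := key j
    have h3 : ‖z j - z₀‖ ≤ r := hzr j
    have h4 : ‖φ (z j) - φ z₀ - J (z j - z₀)‖ ≤ M * r * r := by
      calc ‖φ (z j) - φ z₀ - J (z j - z₀)‖ ≤ M * r * ‖z j - z₀‖ := h2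
        _ ≤ M * r * r := mul_le_mul_of_nonneg_left h3 (by positivity)
    nlinarith [norm_nonneg (φ (z j) - φ z₀ - J (z j - z₀))]
  calc (∑ j, ∑ i, (φ (z j) i - A.mulVec (fun l => z j l) i - b i) ^ 2)
      ≤ ∑ _j : Fin k, M ^ 2 * r ^ 4 := Finset.sum_le_sum fun j _ => hsum j
    _ = M ^ 2 * k * r ^ 4 := by simp [Finset.sum_const]; ring
end

section
/- Conformal version of the local Procrustes bound: if φ is C² with Jacobian at z₀ satisfying J'J = c²I for some c > 0, then inf over column-orthogonal A, scalar s > 0, and b of ∑_j ‖φ(z_j) - sA z_j - b‖² ≤ C·k·r⁴, where r bounds ‖z_j - z₀‖ and C depends only on the second-derivative bound of φ. -/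
open Matrix

/-- Conformal version of the local Procrustes bound: if the
Jacobian at `z₀` satisfies `J'J = c²I` for some `c > 0`, the infimum over
column-orthogonal `A`, scale `s > 0` and translation `b` is at most `C·k·r⁴`,
where `C` depends only on the second-derivative bound `M`. -/
theorem local_procrustes_conformal (M : ℝ) (hM : 0 ≤ M) :
    ∃ C : ℝ, ∀ (d q : ℕ), d ≤ q → ∀ (k : ℕ)
      (D : Set (EuclideanSpace ℝ (Fin d))), Convex ℝ D →
      ∀ (φ : EuclideanSpace ℝ (Fin d) → EuclideanSpace ℝ (Fin q)),
      ContDiff ℝ 2 φ →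
      (∀ z ∈ D, ‖iteratedFDeriv ℝ 2 φ z‖ ≤ M) →
      ∀ z₀ : EuclideanSpace ℝ (Fin d), z₀ ∈ D →
      ∀ c : ℝ, 0 < c →
      (∀ v, ‖fderiv ℝ φ z₀ v‖ = c * ‖v‖) →
      ∀ z : Fin k → EuclideanSpace ℝ (Fin d), (∀ j, z j ∈ D) →
      ∀ r : ℝ, 0 ≤ r → (∀ j, ‖z j - z₀‖ ≤ r) →
      sInf {s : ℝ | ∃ (A : Matrix (Fin q) (Fin d) ℝ) (t : ℝ) (b : Fin q → ℝ),
          Aᵀ * A = 1 ∧ 0 < t ∧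
          s = ∑ j, ∑ i, (φ (z j) i - t * A.mulVec (fun l => z j l) i - b i) ^ 2} ≤
        C * k * r ^ 4 := by
  refine ⟨M ^ 2, ?_⟩
  intro d q hdq k D hD φ hφ hM2 z₀ hz₀ c hc hJ z hz r hr hzr
  set J : EuclideanSpace ℝ (Fin d) →L[ℝ] EuclideanSpace ℝ (Fin q) := fderiv ℝ φ z₀ with hJdef
  set L : EuclideanSpace ℝ (Fin d) →L[ℝ] EuclideanSpace ℝ (Fin q) := c⁻¹ • J with hLdef
  have hLnorm : ∀ v, ‖L v‖ = ‖v‖ := by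
    intro v
    have : L v = c⁻¹ • J v := rfl
    rw [this, norm_smul, hJ v]
    simp [abs_of_pos hc]
    field_simp
  have hLJ : ∀ v, c • L v = J v := by
    intro v
    have : L v = c⁻¹ • J v := rfl
    rw [this, smul_smul]
    field_simp
    exact one_smul _ _
  let Li : EuclideanSpace ℝ (Fin d) →ₗᵢ[ℝ] EuclideanSpace ℝ (Fin q) :=
    ⟨(L : EuclideanSpace ℝ (Fin d) →ₗ[ℝ] EuclideanSpace ℝ (Fin q)), hLnorm⟩
  set A : Matrix (Fin q) (Fin d) ℝ :=
    Matrix.toEuclideanLin.symm (L : EuclideanSpace ℝ (Fin d) →ₗ[ℝ] EuclideanSpace ℝ (Fin q))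
    with hAdef
  have hAlin : Matrix.toEuclideanLin A
      = (L : EuclideanSpace ℝ (Fin d) →ₗ[ℝ] EuclideanSpace ℝ (Fin q)) := by
    rw [hAdef]; exact LinearEquiv.apply_symm_apply _ _
  have hmul : ∀ (x : EuclideanSpace ℝ (Fin d)) (i : Fin q),
      A.mulVec (fun l => x l) i = L x i := by
    intro x i
    have h := Matrix.ofLp_toEuclideanLin_apply A x
    rw [hAlin] at h
    exact (congrFun h i).symm
  have hentry : ∀ (i : Fin q) (l : Fin d), A i l = L (EuclideanSpace.single l 1) i := by
    intro i l
    have h := hmul (EuclideanSpace.single l (1:ℝ)) i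
    classical
    simpa [Matrix.mulVec, dotProduct, EuclideanSpace.single_apply] using h
  have hA : Aᵀ * A = 1 := by
    ext l m
    have h := Li.inner_map_map (EuclideanSpace.single m (1:ℝ)) (EuclideanSpace.single l (1:ℝ))
    simp only [EuclideanSpace.inner_single_left, EuclideanSpace.inner_single_right,
      PiLp.inner_apply, RCLike.inner_apply, starRingEnd_apply, star_trivial] at h
    simp only [Matrix.mul_apply, Matrix.transpose_apply, Matrix.one_apply]
    have hLi : ∀ v, Li v = L v := fun v => rfl
    rw [show (∑ i, A i l * A i m)
        = ∑ i, Li (EuclideanSpace.single l 1) i * Li (EuclideanSpace.single m 1) i by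
      refine Finset.sum_congr rfl fun i _ => ?_
      rw [hentry, hentry, hLi, hLi]]
    rw [h]
    by_cases hlm : l = m <;> simp [hlm, EuclideanSpace.single_apply, eq_comm]
  -- Lipschitz bound on fderiv over D
  have hlip : ∀ x ∈ D, ‖fderiv ℝ φ x - J‖ ≤ M * r → True := fun _ _ _ => trivial
  set S : Set (EuclideanSpace ℝ (Fin d)) := D ∩ Metric.closedBall z₀ r with hSdef
  have hSconv : Convex ℝ S := hD.inter (convex_closedBall _ _)
  have hz₀S : z₀ ∈ S := ⟨hz₀, Metric.mem_closedBall_self hr⟩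
  have hdiff : ∀ x : EuclideanSpace ℝ (Fin d), DifferentiableAt ℝ φ x :=
    fun x => (hφ.differentiable (by norm_num)).differentiableAt
  have hdiff2 : ∀ x : EuclideanSpace ℝ (Fin d), DifferentiableAt ℝ (fderiv ℝ φ) x := by
    intro x
    exact ((hφ.fderiv_right (m := 1) (by norm_num)).differentiable (by norm_num)).differentiableAt
  have hfd2norm : ∀ x : EuclideanSpace ℝ (Fin d),
      ‖fderiv ℝ (fderiv ℝ φ) x‖ = ‖iteratedFDeriv ℝ 2 φ x‖ := by
    intro x
    have h1 : ‖iteratedFDeriv ℝ 0 (fderiv ℝ (fderiv ℝ φ)) x‖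
        = ‖iteratedFDeriv ℝ 1 (fderiv ℝ φ) x‖ := norm_iteratedFDeriv_fderiv
    have h2 : ‖iteratedFDeriv ℝ 1 (fderiv ℝ φ) x‖ = ‖iteratedFDeriv ℝ 2 φ x‖ :=
      norm_iteratedFDeriv_fderiv
    rw [← h2, ← h1, norm_iteratedFDeriv_zero]
  -- fderiv Lipschitz bound on S
  have hfdbound : ∀ x ∈ S, ‖fderiv ℝ φ x - J‖ ≤ M * r := by
    intro x hx
    have := hD.norm_image_sub_le_of_norm_fderiv_le (f := fderiv ℝ φ)
      (fun y _ => hdiff2 y)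
      (fun y hy => by rw [hfd2norm]; exact hM2 y hy) hz₀ hx.1
    calc ‖fderiv ℝ φ x - J‖ = ‖fderiv ℝ φ x - fderiv ℝ φ z₀‖ := rfl
      _ ≤ M * ‖x - z₀‖ := this
      _ ≤ M * r := by
          apply mul_le_mul_of_nonneg_left _ hM
          rw [← dist_eq_norm]
          exact hx.2
  -- Taylor bound
  have htaylor : ∀ j : Fin k, ‖φ (z j) - φ z₀ - J (z j - z₀)‖ ≤ M * r * ‖z j - z₀‖ := by
    intro j
    have hzjS : z j ∈ S := ⟨hz j, by rw [Metric.mem_closedBall, dist_eq_norm]; exact hzr j⟩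
    exact hSconv.norm_image_sub_le_of_norm_fderiv_le' (fun y _ => hdiff y) hfdbound hz₀S hzjS
  -- The candidate value
  set b : Fin q → ℝ := fun i => φ z₀ i - J z₀ i with hbdef
  set V : ℝ := ∑ j, ∑ i, (φ (z j) i - c * A.mulVec (fun l => z j l) i - b i) ^ 2 with hVdef
  have hVmem : V ∈ {s : ℝ | ∃ (A : Matrix (Fin q) (Fin d) ℝ) (t : ℝ) (b : Fin q → ℝ),
      Aᵀ * A = 1 ∧ 0 < t ∧
      s = ∑ j, ∑ i, (φ (z j) i - t * A.mulVec (fun l => z j l) i - b i) ^ 2} :=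
    ⟨A, c, b, hA, hc, rfl⟩
  have hbdd : BddBelow {s : ℝ | ∃ (A : Matrix (Fin q) (Fin d) ℝ) (t : ℝ) (b : Fin q → ℝ),
      Aᵀ * A = 1 ∧ 0 < t ∧
      s = ∑ j, ∑ i, (φ (z j) i - t * A.mulVec (fun l => z j l) i - b i) ^ 2} := by
    refine ⟨0, ?_⟩
    rintro s ⟨A', t, b', _, _, rfl⟩
    positivity
  refine le_trans (csInf_le hbdd hVmem) ?_
  -- Bound V
  have hterm : ∀ j : Fin k,
      (∑ i, (φ (z j) i - c * A.mulVec (fun l => z j l) i - b i) ^ 2) ≤ M ^ 2 * r ^ 4 := by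
    intro j
    have heq : ∀ i, φ (z j) i - c * A.mulVec (fun l => z j l) i - b i
        = (φ (z j) - φ z₀ - J (z j - z₀)) i := by
      intro i
      have h1 : c * A.mulVec (fun l => z j l) i = J (z j) i := by
        rw [hmul]
        have := congrFun (congrArg (fun (v : EuclideanSpace ℝ (Fin q)) => (v : Fin q → ℝ))
          (hLJ (z j))) i
        simpa using this
      simp only [h1, hbdef, map_sub, PiLp.sub_apply]
      ring
    have hsum : (∑ i, (φ (z j) i - c * A.mulVec (fun l => z j l) i - b i) ^ 2)
        = ‖φ (z j) - φ z₀ - J (z j - z₀)‖ ^ 2 := by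
      rw [EuclideanSpace.norm_eq]
      rw [Real.sq_sqrt (by positivity)]
      exact Finset.sum_congr rfl fun i _ => by rw [heq i, Real.norm_eq_abs, sq_abs]
    rw [hsum]
    have hbnd := htaylor j
    have h2 : ‖φ (z j) - φ z₀ - J (z j - z₀)‖ ≤ M * r ^ 2 := by
      refine hbnd.trans ?_
      have : M * r * ‖z j - z₀‖ ≤ M * r * r :=
        mul_le_mul_of_nonneg_left (hzr j) (by positivity)
      calc M * r * ‖z j - z₀‖ ≤ M * r * r := this
        _ = M * r ^ 2 := by ring
    calc ‖φ (z j) - φ z₀ - J (z j - z₀)‖ ^ 2 ≤ (M * r ^ 2) ^ 2 :=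
        pow_le_pow_left₀ (norm_nonneg _) h2 2
      _ = M ^ 2 * r ^ 4 := by ring
  calc V ≤ ∑ _j : Fin k, M ^ 2 * r ^ 4 := Finset.sum_le_sum fun j _ => hterm j
    _ = M ^ 2 * k * r ^ 4 := by
        rw [Finset.sum_const]
        simp [Finset.card_univ]
        ring
end

section
/- PCA projection dominates any other orthogonal projection in explained variance: if X is a k×q centered data matrix and P is the q×d matrix of its top d principal components, then for any q×d matrix J with orthonormal columns, ∑_{j=1}^k ‖P'x_j‖² ≥ ∑_{j=1}^k ‖J'x_j‖², and ∑_{j=1}^k ‖x_j‖² ≥ ∑_{j=1}^k ‖P'x_j‖². -/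
open Matrix

lemma pca_tr_quad {q d : ℕ} (μ : Fin q → ℝ) (B : Matrix (Fin q) (Fin d) ℝ) :
    (Bᵀ * (Matrix.diagonal μ * B)).trace = ∑ i, μ i * ∑ a, (B i a)^2 := by
  simp only [Matrix.trace, Matrix.diag, Matrix.mul_apply, Matrix.transpose_apply,
    Finset.mul_sum]
  rw [Finset.sum_comm]
  congr 1; ext i; congr 1; ext a
  simp [Matrix.diagonal_apply, mul_ite, ite_mul]
  ring

lemma pca_ind_sum {q d : ℕ} (hd : d ≤ q) (i : Fin q) :
    (∑ a : Fin d, if i = Fin.castLE hd a then (1:ℝ) else 0) =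
      if (i:ℕ) < d then 1 else 0 := by
  by_cases h : (i:ℕ) < d
  · rw [if_pos h, Finset.sum_eq_single (⟨i, h⟩ : Fin d)]
    · simp [Fin.ext_iff]
    · intro a _ ha
      rw [if_neg]
      intro hc
      exact ha (by simp [Fin.ext_iff, hc, Fin.ext_iff.mp hc])
    · simp
  · rw [if_neg h, Finset.sum_eq_zero]
    intro a _
    rw [if_neg]
    intro hc
    exact h (by rw [hc]; exact a.isLt)

lemma pca_ind_card {q d : ℕ} (hd : d ≤ q) :
    (∑ i : Fin q, if (i:ℕ) < d then (1:ℝ) else 0) = d := by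
  rw [Fin.sum_univ_eq_sum_range (fun n => if n < d then (1:ℝ) else 0) q,
    ← Finset.sum_filter]
  have : (Finset.range q).filter (· < d) = Finset.range d := by
    ext n; simp; omega
  rw [this, Finset.sum_const, Finset.card_range]
  simp

lemma pca_wle1 {q d : ℕ} (B : Matrix (Fin q) (Fin d) ℝ) (hB : Bᵀ * B = 1) (i : Fin q) :
    ∑ a, (B i a)^2 ≤ 1 := by
  set M := B * Bᵀ with hM
  have hidem : M * M = M := by
    rw [hM]
    calc B * Bᵀ * (B * Bᵀ) = B * ((Bᵀ * B) * Bᵀ) := by simp only [Matrix.mul_assoc]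
      _ = B * Bᵀ := by rw [hB]; simp
  have hsym : ∀ a b, M a b = M b a := by
    intro a b
    simp [hM, Matrix.mul_apply, Matrix.transpose_apply, mul_comm]
  have hw : M i i = ∑ a, (B i a)^2 := by
    simp [hM, Matrix.mul_apply, sq]
  have h2 : M i i = ∑ j, (M i j)^2 := by
    conv_lhs => rw [← hidem]
    rw [Matrix.mul_apply]
    congr 1; ext j
    rw [sq, hsym j i]
  have h3 : (M i i)^2 ≤ M i i :=
    calc (M i i)^2 ≤ ∑ j, (M i j)^2 :=
          Finset.single_le_sum (fun j _ => sq_nonneg (M i j)) (Finset.mem_univ i)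
      _ = M i i := h2.symm
  have h0 : 0 ≤ M i i := by rw [hw]; exact Finset.sum_nonneg fun a _ => sq_nonneg _
  nlinarith [hw]

/-- PCA projection dominates any other orthogonal projection in
explained variance: `∑ⱼ ‖J'xⱼ‖² ≤ ∑ⱼ ‖P'xⱼ‖² ≤ ∑ⱼ ‖xⱼ‖²` where `P` holds the
top-`d` eigenvectors of `X'X` and `J` has orthonormal columns. -/
theorem pca_dominates {k q d : ℕ} (hd : d ≤ q)
    (X : Matrix (Fin k) (Fin q) ℝ) (hcent : ∀ j, ∑ i, X i j = 0)
    (Q : Matrix (Fin q) (Fin q) ℝ) (μ : Fin q → ℝ)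
    (hQ : Qᵀ * Q = 1) (hQ' : Q * Qᵀ = 1)
    (hdiag : Xᵀ * X = Q * Matrix.diagonal μ * Qᵀ)
    (hmono : ∀ i j : Fin q, i ≤ j → μ j ≤ μ i)
    (P : Matrix (Fin q) (Fin d) ℝ) (hP : P = Q.submatrix id (Fin.castLE hd))
    (J : Matrix (Fin q) (Fin d) ℝ) (hJ : Jᵀ * J = 1) :
    ((X * J)ᵀ * (X * J)).trace ≤ ((X * P)ᵀ * (X * P)).trace ∧
    ((X * P)ᵀ * (X * P)).trace ≤ (Xᵀ * X).trace := by
  -- rewrite (X*S)ᵀ*(X*S) in terms of B = Qᵀ*S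
  have key : ∀ S : Matrix (Fin q) (Fin d) ℝ,
      (X * S)ᵀ * (X * S) = (Qᵀ * S)ᵀ * (Matrix.diagonal μ * (Qᵀ * S)) := by
    intro S
    have h1 : (X * S)ᵀ * (X * S) = Sᵀ * ((Xᵀ * X) * S) := by
      simp only [transpose_mul, Matrix.mul_assoc]
    rw [h1, hdiag]
    simp only [transpose_mul, transpose_transpose, Matrix.mul_assoc]
  -- μ is nonnegative
  have hμ0 : ∀ i, 0 ≤ μ i := by
    have hD : Matrix.diagonal μ = (X * Q)ᵀ * (X * Q) := by
      have h1 : (X * Q)ᵀ * (X * Q) = Qᵀ * ((Xᵀ * X) * Q) := by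
        simp only [transpose_mul, Matrix.mul_assoc]
      rw [h1, hdiag]
      calc Matrix.diagonal μ
          = (Qᵀ * Q) * Matrix.diagonal μ * (Qᵀ * Q) := by rw [hQ]; simp
        _ = Qᵀ * (Q * Matrix.diagonal μ * Qᵀ * Q) := by simp only [Matrix.mul_assoc]
    intro i
    have := congrArg (fun M => M i i) hD
    simp only [Matrix.diagonal_apply_eq, Matrix.mul_apply, Matrix.transpose_apply] at this
    rw [this]
    exact Finset.sum_nonneg fun j _ => mul_self_nonneg _
  -- the J side
  set B := Qᵀ * J with hBdef
  have hB : Bᵀ * B = 1 := by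
    rw [hBdef, transpose_mul, transpose_transpose]
    calc Jᵀ * Q * (Qᵀ * J) = Jᵀ * ((Q * Qᵀ) * J) := by simp only [Matrix.mul_assoc]
      _ = 1 := by rw [hQ']; simpa using hJ
  set w : Fin q → ℝ := fun i => ∑ a, (B i a)^2 with hwdef
  have hw0 : ∀ i, 0 ≤ w i := fun i => Finset.sum_nonneg fun a _ => sq_nonneg _
  have hw1 : ∀ i, w i ≤ 1 := fun i => pca_wle1 B hB i
  have hwsum : ∑ i, w i = d := by
    have h1 : (Bᵀ * (Matrix.diagonal (fun _ : Fin q => (1:ℝ)) * B)).trace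
        = ∑ i, (1:ℝ) * w i := pca_tr_quad _ B
    rw [Matrix.diagonal_one, Matrix.one_mul, hB] at h1
    simp only [one_mul] at h1
    rw [← h1, Matrix.trace_one]
    simp
  have traceJ : ((X * J)ᵀ * (X * J)).trace = ∑ i, μ i * w i := by
    rw [key J, ← hBdef, pca_tr_quad]
  -- the P side
  have hBP : ∀ (i : Fin q) (a : Fin d),
      (Qᵀ * P) i a = if i = Fin.castLE hd a then (1:ℝ) else 0 := by
    intro i a
    have h1 : (Qᵀ * P) i a = (Qᵀ * Q) i (Fin.castLE hd a) := by
      simp [hP, Matrix.mul_apply, Matrix.submatrix]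
    rw [h1, hQ, Matrix.one_apply]
  have traceP : ((X * P)ᵀ * (X * P)).trace
      = ∑ i, μ i * (if (i:ℕ) < d then (1:ℝ) else 0) := by
    rw [key P, pca_tr_quad]
    congr 1; ext i
    congr 1
    rw [← pca_ind_sum hd i]
    congr 1; ext a
    rw [hBP i a]
    by_cases h : i = Fin.castLE hd a <;> simp [h]
  -- threshold value
  set t : ℝ := if h : d < q then μ ⟨d, h⟩ else 0 with htdef
  have htle : ∀ i : Fin q, (i:ℕ) < d → t ≤ μ i := by
    intro i hi
    by_cases h : d < q
    · rw [htdef, dif_pos h]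
      exact hmono i ⟨d, h⟩ (by simpa [Fin.le_def] using hi.le)
    · rw [htdef, dif_neg h]
      exact hμ0 i
  have htge : ∀ i : Fin q, d ≤ (i:ℕ) → μ i ≤ t := by
    intro i hi
    have h : d < q := lt_of_le_of_lt hi i.isLt
    rw [htdef, dif_pos h]
    exact hmono ⟨d, h⟩ i (by simpa [Fin.le_def] using hi)
  constructor
  · -- first inequality
    rw [traceJ, traceP]
    have hterm : ∀ i ∈ Finset.univ,
        μ i * w i - μ i * (if (i:ℕ) < d then (1:ℝ) else 0)
          ≤ t * (w i - (if (i:ℕ) < d then (1:ℝ) else 0)) := by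
      intro i _
      by_cases h : (i:ℕ) < d
      · rw [if_pos h]
        have := htle i h
        have := hw1 i
        nlinarith
      · rw [if_neg h]
        have := htge i (le_of_not_gt h)
        have := hw0 i
        nlinarith
    have hsum := Finset.sum_le_sum hterm
    rw [Finset.sum_sub_distrib] at hsum
    have hrhs : ∑ i : Fin q, t * (w i - (if (i:ℕ) < d then (1:ℝ) else 0)) = 0 := by
      rw [← Finset.mul_sum, Finset.sum_sub_distrib, hwsum, pca_ind_card hd]
      ring
    rw [hrhs] at hsum
    linarith
  · -- second inequality
    rw [traceP, hdiag]
    have htr : (Q * Matrix.diagonal μ * Qᵀ).trace = ∑ i, μ i := by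
      rw [Matrix.trace_mul_comm, ← Matrix.mul_assoc, hQ, Matrix.one_mul,
        Matrix.trace_diagonal]
    rw [htr]
    apply Finset.sum_le_sum
    intro i _
    by_cases h : (i:ℕ) < d <;> simp [h, hμ0 i]
end

section
/- Tangent-space residual bound: if φ : D → ℝ^q is C² with second derivative bounded by M and Jacobian J at z₀ with J'J = I, then for points z_j with ‖z_j − z₀‖ ≤ r and x_j = φ(z_j), setting x̄ = (1/k)∑ x_j, one has ∑_{j=1}^k (‖x_j − x̄‖² − ‖J'(x_j − x̄)‖²) ≤ C·k·r⁴ for a constant C depending only on M. -/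
open Matrix
open scoped RealInnerProductSpace

/-- For an isometric continuous linear map `J` between real inner product spaces
(finite-dim), `‖u‖² − ‖J† u‖² ≤ ‖u − J w‖²` for any `w`. -/
lemma aux_residual_le {d q : ℕ} (J : EuclideanSpace ℝ (Fin d) →L[ℝ] EuclideanSpace ℝ (Fin q))
    (hJ : ∀ v, ‖J v‖ = ‖v‖) (u : EuclideanSpace ℝ (Fin q)) (w : EuclideanSpace ℝ (Fin d)) :
    ‖u‖ ^ 2 - ‖(ContinuousLinearMap.adjoint J) u‖ ^ 2 ≤ ‖u - J w‖ ^ 2 := by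
  have h1 : ‖u - J w‖ ^ 2 = ‖u‖ ^ 2 - 2 * ⟪u, J w⟫ + ‖J w‖ ^ 2 := norm_sub_sq_real u (J w)
  have h2 : ‖(ContinuousLinearMap.adjoint J) u - w‖ ^ 2 =
      ‖(ContinuousLinearMap.adjoint J) u‖ ^ 2 -
        2 * ⟪(ContinuousLinearMap.adjoint J) u, w⟫ + ‖w‖ ^ 2 :=
    norm_sub_sq_real _ _
  have h3 : ⟪(ContinuousLinearMap.adjoint J) u, w⟫ = ⟪u, J w⟫ :=
    ContinuousLinearMap.adjoint_inner_left J w u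
  have h4 : ‖J w‖ ^ 2 = ‖w‖ ^ 2 := by rw [hJ w]
  have h5 : (0:ℝ) ≤ ‖(ContinuousLinearMap.adjoint J) u - w‖ ^ 2 := sq_nonneg _
  linarith [h1, h2, h3, h4, h5]

/-- Tangent-space residual bound: if `φ` is C² with second
derivative bounded by `M` and isometric Jacobian `J` at `z₀`, then
`∑ⱼ (‖xⱼ−x̄‖² − ‖J'(xⱼ−x̄)‖²) ≤ C·k·r⁴` with `C` depending only on `M`. -/
theorem tangent_space_residual_bound (M : ℝ) (hM : 0 ≤ M) :
    ∃ C : ℝ, ∀ (d q k : ℕ), 0 < k →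
      ∀ (D : Set (EuclideanSpace ℝ (Fin d))), Convex ℝ D →
      ∀ (φ : EuclideanSpace ℝ (Fin d) → EuclideanSpace ℝ (Fin q)),
      ContDiff ℝ 2 φ →
      (∀ z ∈ D, ‖iteratedFDeriv ℝ 2 φ z‖ ≤ M) →
      ∀ z₀ : EuclideanSpace ℝ (Fin d), z₀ ∈ D →
      (∀ v, ‖fderiv ℝ φ z₀ v‖ = ‖v‖) →
      ∀ z : Fin k → EuclideanSpace ℝ (Fin d), (∀ j, z j ∈ D) →
      ∀ r : ℝ, 0 ≤ r → (∀ j, ‖z j - z₀‖ ≤ r) →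
      ∀ xbar : EuclideanSpace ℝ (Fin q), xbar = (k : ℝ)⁻¹ • ∑ j, φ (z j) →
      ∑ j, (‖φ (z j) - xbar‖ ^ 2 -
          ‖(ContinuousLinearMap.adjoint (fderiv ℝ φ z₀)) (φ (z j) - xbar)‖ ^ 2) ≤
        C * k * r ^ 4 := by
  refine ⟨4 * M ^ 2, ?_⟩
  intro d q k hk D hD φ hφ hM2 z₀ hz₀ hJ z hz r hr hzr xbar hxbar
  have hk0 : (k : ℝ) ≠ 0 := Nat.cast_ne_zero.mpr hk.ne'
  set J := fderiv ℝ φ z₀ with hJdef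
  -- second derivative bound
  have hdd : ∀ x ∈ D, ‖fderiv ℝ (fderiv ℝ φ) x‖ ≤ M := by
    intro x hx
    have heq : ‖fderiv ℝ (fderiv ℝ φ) x‖ = ‖iteratedFDeriv ℝ 2 φ x‖ := by
      rw [← norm_iteratedFDeriv_fderiv (n := 1), ← norm_iteratedFDeriv_fderiv (n := 0),
        norm_iteratedFDeriv_zero]
    rw [heq]; exact hM2 x hx
  have hd1 : ContDiff ℝ 1 (fderiv ℝ φ) := hφ.fderiv_right (by norm_num)
  set e : Fin k → EuclideanSpace ℝ (Fin q) :=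
    fun i => φ (z i) - φ z₀ - J (z i - z₀) with he
  -- Taylor bound
  have htay : ∀ j, ‖e j‖ ≤ M * r * r := by
    intro j
    have hsub : segment ℝ z₀ (z j) ⊆ D := hD.segment_subset hz₀ (hz j)
    have hball : segment ℝ z₀ (z j) ⊆ Metric.closedBall z₀ r :=
      (convex_closedBall z₀ r).segment_subset (Metric.mem_closedBall_self hr)
        (by simpa [Metric.mem_closedBall, dist_eq_norm] using hzr j)
    -- first: fderiv is M·r-close to J on the segment
    have hlip : ∀ w ∈ segment ℝ z₀ (z j), ‖fderiv ℝ φ w - J‖ ≤ M * r := by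
      intro w hw
      have hsub2 : segment ℝ z₀ w ⊆ D := hD.segment_subset hz₀ (hsub hw)
      have hmvt : ‖fderiv ℝ φ w - fderiv ℝ φ z₀‖ ≤ M * ‖w - z₀‖ :=
        (convex_segment z₀ w).norm_image_sub_le_of_norm_fderiv_le
          (fun x hx => (hd1.differentiable (by norm_num)).differentiableAt)
          (fun x hx => hdd x (hsub2 hx)) (left_mem_segment ℝ z₀ w)
          (right_mem_segment ℝ z₀ w)
      have hwr : ‖w - z₀‖ ≤ r := by
        have := hball hw
        simpa [Metric.mem_closedBall, dist_eq_norm] using this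
      calc ‖fderiv ℝ φ w - J‖ = ‖fderiv ℝ φ w - fderiv ℝ φ z₀‖ := by rw [hJdef]
        _ ≤ M * ‖w - z₀‖ := hmvt
        _ ≤ M * r := by exact mul_le_mul_of_nonneg_left hwr hM
    have hT : ‖φ (z j) - φ z₀ - J (z j - z₀)‖ ≤ M * r * ‖z j - z₀‖ :=
      (convex_segment z₀ (z j)).norm_image_sub_le_of_norm_fderiv_le'
        (fun x hx => (hφ.differentiable (by norm_num)).differentiableAt)
        (fun x hx => hlip x hx) (left_mem_segment ℝ z₀ (z j))
        (right_mem_segment ℝ z₀ (z j))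
    calc ‖e j‖ = ‖φ (z j) - φ z₀ - J (z j - z₀)‖ := rfl
      _ ≤ M * r * ‖z j - z₀‖ := hT
      _ ≤ M * r * r := by
          exact mul_le_mul_of_nonneg_left (hzr j) (mul_nonneg hM hr)
  -- key algebraic identity
  have key : ∀ j, φ (z j) - xbar - J (z j - (k:ℝ)⁻¹ • ∑ i, z i)
      = e j - (k:ℝ)⁻¹ • ∑ i, e i := by
    intro j
    have h1 : ∀ i, φ (z i) = J (z i) + (φ z₀ - J z₀) + e i := by
      intro i
      simp only [he, map_sub]
      abel
    rw [hxbar]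
    simp only [h1, map_sub, _root_.map_smul, map_sum, Finset.sum_add_distrib,
      Finset.sum_const, Finset.card_univ, Fintype.card_fin, smul_add]
    have hc : (k:ℝ)⁻¹ • (k • (φ z₀ - J z₀)) = φ z₀ - J z₀ := by
      rw [← Nat.cast_smul_eq_nsmul ℝ, smul_smul, inv_mul_cancel₀ hk0, one_smul]
    rw [hc]
    abel
  -- per-term bound
  have hterm : ∀ j, ‖φ (z j) - xbar‖ ^ 2 -
      ‖(ContinuousLinearMap.adjoint J) (φ (z j) - xbar)‖ ^ 2 ≤ 4 * M ^ 2 * r ^ 4 := by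
    intro j
    have hle := aux_residual_le J hJ (φ (z j) - xbar) (z j - (k:ℝ)⁻¹ • ∑ i, z i)
    rw [key j] at hle
    have hsum : ‖(k:ℝ)⁻¹ • ∑ i, e i‖ ≤ M * r * r := by
      rw [norm_smul]
      have h1 : ‖∑ i, e i‖ ≤ (k : ℝ) * (M * r * r) := by
        calc ‖∑ i, e i‖ ≤ ∑ i, ‖e i‖ := norm_sum_le _ _
          _ ≤ ∑ _i : Fin k, (M * r * r) := Finset.sum_le_sum fun i _ => htay i
          _ = (k : ℝ) * (M * r * r) := by
              simp [Finset.sum_const, Finset.card_univ, mul_comm]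
      have h2 : ‖(k:ℝ)⁻¹‖ = (k:ℝ)⁻¹ := by
        rw [Real.norm_eq_abs, abs_of_nonneg (by positivity)]
      rw [h2]
      calc (k:ℝ)⁻¹ * ‖∑ i, e i‖ ≤ (k:ℝ)⁻¹ * ((k:ℝ) * (M * r * r)) := by
            exact mul_le_mul_of_nonneg_left h1 (by positivity)
        _ = M * r * r := by field_simp
    have hnorm : ‖e j - (k:ℝ)⁻¹ • ∑ i, e i‖ ≤ 2 * (M * r * r) := by
      calc ‖e j - (k:ℝ)⁻¹ • ∑ i, e i‖ ≤ ‖e j‖ + ‖(k:ℝ)⁻¹ • ∑ i, e i‖ := norm_sub_le _ _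
        _ ≤ M * r * r + M * r * r := add_le_add (htay j) hsum
        _ = 2 * (M * r * r) := by ring
    have hsq : ‖e j - (k:ℝ)⁻¹ • ∑ i, e i‖ ^ 2 ≤ (2 * (M * r * r)) ^ 2 := by
      exact pow_le_pow_left₀ (norm_nonneg _) hnorm 2
    calc ‖φ (z j) - xbar‖ ^ 2 - ‖(ContinuousLinearMap.adjoint J) (φ (z j) - xbar)‖ ^ 2
        ≤ ‖e j - (k:ℝ)⁻¹ • ∑ i, e i‖ ^ 2 := hle
      _ ≤ (2 * (M * r * r)) ^ 2 := hsq
      _ = 4 * M ^ 2 * r ^ 4 := by ring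
  calc ∑ j, (‖φ (z j) - xbar‖ ^ 2 -
        ‖(ContinuousLinearMap.adjoint J) (φ (z j) - xbar)‖ ^ 2)
      ≤ ∑ _j : Fin k, (4 * M ^ 2 * r ^ 4) := Finset.sum_le_sum fun j _ => hterm j
    _ = (k : ℝ) * (4 * M ^ 2 * r ^ 4) := by
        simp [Finset.sum_const, Finset.card_univ, mul_comm]
    _ = 4 * M ^ 2 * k * r ^ 4 := by ring
end
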